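/- arXiv:1107.0557 — 4 statements merged into one kernel-verified Lean document; each statement's English description precedes it below -/
import Mathlib

section
/- Let M be a right R-module of injective dimension at most 1. If for every countable family (M_i)_{i<ω} of right R-modules the canonical map ⨁_{i<ω} Ext¹_R(M_i, M) → Ext¹_R(∏_{i<ω} M_i, M) is an isomorphism, then M is injective. -/
open CategoryTheory CategoryTheory.Limits Opposite

noncomputable section

/-- The category of right `R`-modules. -/
abbrev RMod (R : Type) [Ring R] := ModuleCat.{0} Rᵐᵒᵖ

/-- `R` as a right module over itself. -/
abbrev regR (R : Type) [Ring R] : RMod R := ModuleCat.of Rᵐᵒᵖ R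

/-- The covariant functor `Ext¹_R(M, -)` (more generally `Extⁿ_R(M, -)`). -/
abbrev extFun (R : Type) [Ring R] (n : ℕ) (M : RMod R) : RMod R ⥤ ModuleCat ℤ :=
  (Ext ℤ (RMod R) n).obj (op M)

/-- `Ext¹_R(M,-)` commutes with direct limits (direct systems over directed sets). -/
def CommutesWithDirectLimits (R : Type) [Ring R] (M : RMod R) : Prop :=
  ∀ (J : Type) [Preorder J] [IsDirected J (· ≤ ·)] [Nonempty J],
    PreservesColimitsOfShape J (extFun R 1 M)

/-- `Ext¹_R(M,-)` commutes with direct sums. -/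
def CommutesWithDirectSums (R : Type) [Ring R] (M : RMod R) : Prop :=
  ∀ (ι : Type), PreservesColimitsOfShape (Discrete ι) (extFun R 1 M)

/-- `Extⁿ_R(M,-)` commutes with direct sums of copies of `R`: the canonical map
`Extⁿ_R(M,R)^{(ι)} → Extⁿ_R(M,R^{(ι)})` is an isomorphism for every index set `ι`. -/
def CommutesWithSumsOfR (R : Type) [Ring R] (n : ℕ) (M : RMod R) : Prop :=
  ∀ (ι : Type), IsIso (Sigma.desc
    (fun i : ι => (extFun R n M).map (Sigma.ι (fun _ : ι => regR R) i)))

/-- A module `K` is small iff `Hom_R(K,-)` commutes with direct sums. -/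
def IsSmallModule (R : Type) [Ring R] (K : RMod R) : Prop :=
  ∀ (ι : Type), PreservesColimitsOfShape (Discrete ι) (preadditiveCoyoneda.obj (op K))

/-- `M` has a short exact sequence `0 → K → P → M → 0` with `P` projective and `K`
satisfying the property `Q` (e.g. `M` is fp-Ω¹, fg-Ω¹ or small-Ω¹). -/
def IsOmega1 (R : Type) [Ring R] (Q : RMod R → Prop) (M : RMod R) : Prop :=
  ∃ (K P : RMod R) (i : K ⟶ P) (p : P ⟶ M) (w : i ≫ p = 0),
    Mono i ∧ Epi p ∧ (ShortComplex.mk i p w).Exact ∧ Projective P ∧ Q K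

/-- `M` has projective dimension at most 1. -/
def HasProjDimLE1 (R : Type) [Ring R] (M : RMod R) : Prop :=
  ∃ (P₁ P₀ : RMod R) (f : P₁ ⟶ P₀) (p : P₀ ⟶ M) (w : f ≫ p = 0),
    Projective P₁ ∧ Projective P₀ ∧ Mono f ∧ Epi p ∧ (ShortComplex.mk f p w).Exact

/-- `M` is `FP₂`: it admits a projective resolution which is finitely generated in
dimensions `0`, `1` and `2`. -/
def IsFP2 (R : Type) [Ring R] (M : RMod R) : Prop :=
  ∃ (P₂ P₁ P₀ : RMod R) (d₂ : P₂ ⟶ P₁) (d₁ : P₁ ⟶ P₀) (p : P₀ ⟶ M)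
    (w₂ : d₂ ≫ d₁ = 0) (w₁ : d₁ ≫ p = 0),
    Projective P₂ ∧ Projective P₁ ∧ Projective P₀ ∧
    Module.Finite Rᵐᵒᵖ P₂ ∧ Module.Finite Rᵐᵒᵖ P₁ ∧ Module.Finite Rᵐᵒᵖ P₀ ∧
    Epi p ∧ (ShortComplex.mk d₂ d₁ w₂).Exact ∧ (ShortComplex.mk d₁ p w₁).Exact

/-- `M` has injective dimension at most `n`, i.e. `Ext^k(-,M)` vanishes for `k > n`. -/
def HasInjDimLE (R : Type) [Ring R] (n : ℕ) (M : RMod R) : Prop :=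
  ∀ (k : ℕ), n < k → ∀ (N : RMod R), IsZero (((Ext ℤ (RMod R) k).obj (op N)).obj M)

open ZeroObject

set_option maxHeartbeats 1000000 in
set_option synthInstance.maxHeartbeats 400000 in
theorem ext1_inverts_countable_products_implies_injective
    (R : Type) [Ring R] (M : RMod R)
    (hM : ∃ (E₀ E₁ : RMod R) (f : M ⟶ E₀) (g : E₀ ⟶ E₁) (w : f ≫ g = 0),
      Injective E₀ ∧ Injective E₁ ∧ Mono f ∧ Epi g ∧ (ShortComplex.mk f g w).Exact)
    (hc : ∀ (N : ℕ → RMod R),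
      IsIso (Sigma.desc
        (fun i => ((Ext ℤ (RMod R) 1).flip.obj M).map ((Pi.π N i).op)))) :
    Injective M := by
  classical
  obtain ⟨E₀, E₁, f, g, w, hE₀, hE₁, hf, hg, hexact⟩ := hM
  haveI := hE₀; haveI := hE₁; haveI := hf; haveI := hg
  -- applying an isomorphism of `ℤ`-modules to a nonzero element gives a nonzero element
  have iso_inj : ∀ {A B : ModuleCat ℤ} (σ : A ≅ B) (z : A), σ.hom z = 0 → z = 0 := by
    intro A B σ z hz
    calc z = (σ.hom ≫ σ.inv) z := by rw [Iso.hom_inv_id]; rfl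
      _ = σ.inv (σ.hom z) := rfl
      _ = σ.inv 0 := by rw [hz]
      _ = 0 := map_zero _
  -- The contravariant functor `N ↦ Ext¹(N, M)`.
  set F : (RMod R)ᵒᵖ ⥤ ModuleCat ℤ := (Ext ℤ (RMod R) 1).flip.obj M with hF
  -- Maps induced by zero morphisms vanish on `F`.
  have hzero : ∀ (A B : RMod R) (z : F.obj (op B)), F.map (0 : A ⟶ B).op z = 0 := by
    intro A B z
    have h0 : (0 : A ⟶ B) = (0 : A ⟶ (0 : RMod R)) ≫ (0 : (0 : RMod R) ⟶ B) := by simp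
    rw [h0, op_comp, F.map_comp]
    have hZ : IsZero (F.obj (op (0 : RMod R))) :=
      isZero_Ext_succ_of_projective (0 : RMod R) M 0
    have h1 : F.map (0 : (0 : RMod R) ⟶ B).op z = 0 := by
      have h2 : (𝟙 (F.obj (op (0 : RMod R)))) = 0 := hZ.eq_of_src _ _
      calc F.map (0 : (0 : RMod R) ⟶ B).op z
          = (𝟙 (F.obj (op (0 : RMod R)))) (F.map (0 : (0 : RMod R) ⟶ B).op z) := rfl
        _ = (0 : F.obj (op (0 : RMod R)) ⟶ F.obj (op (0 : RMod R)))
              (F.map (0 : (0 : RMod R) ⟶ B).op z) := by rw [h2]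
        _ = 0 := rfl
    show F.map (0 : A ⟶ (0 : RMod R)).op (F.map (0 : (0 : RMod R) ⟶ B).op z) = 0
    rw [h1]
    exact map_zero _
  -- A projective resolution of `E₁` and the extension class `x` of `0 → M → E₀ → E₁ → 0`.
  let P : ProjectiveResolution E₁ := ProjectiveResolution.of E₁
  let p : P.complex.X 0 ⟶ E₁ := P.π.f 0
  let d₁ : P.complex.X 1 ⟶ P.complex.X 0 := P.complex.d 1 0
  let k : P.complex.X 0 ⟶ E₀ := Projective.factorThru p g
  have hk : k ≫ g = p := Projective.factorThru_comp p g
  have hdp : d₁ ≫ p = 0 := P.complex_d_comp_π_f_zero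
  have hdkg : (d₁ ≫ k) ≫ g = 0 := by rw [Category.assoc, hk, hdp]
  obtain ⟨m, hm⟩ := KernelFork.IsLimit.lift' hexact.fIsKernel (d₁ ≫ k) hdkg
  have hm' : m ≫ f = d₁ ≫ k := by simpa using hm
  have hm2 : P.complex.d 2 1 ≫ m = 0 := by
    rw [← cancel_mono f, Category.assoc, hm', zero_comp,
      ← Category.assoc, HomologicalComplex.d_comp_d, zero_comp]
  let K := P.complex.linearYonedaObj ℤ M
  let S : ShortComplex (ModuleCat ℤ) := K.sc' 0 1 2
  have hSg : ∀ (t : P.complex.X 1 ⟶ M), S.g t = P.complex.d 2 1 ≫ t := fun _ => rfl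
  have hSf : ∀ (t : P.complex.X 0 ⟶ M), S.f t = P.complex.d 1 0 ≫ t := fun _ => rfl
  let mcyc : LinearMap.ker S.g.hom := ⟨m, LinearMap.mem_ker.2 ((hSg m).trans hm2)⟩
  let hcl : S.moduleCatLeftHomologyData.H := S.moduleCatLeftHomologyData.π mcyc
  let x : F.obj (op E₁) := (P.isoExt 1 M).inv
    ((K.homologyIsoSc' 0 1 2 (by simp) (by simp)).inv (S.moduleCatHomologyIso.inv hcl))
  -- If `x = 0` then `g` splits.
  have split : x = 0 → ∃ s : E₁ ⟶ E₀, s ≫ g = 𝟙 E₁ := by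
    intro hx
    have h1a : (K.homologyIsoSc' 0 1 2 (by simp) (by simp)).inv
        (S.moduleCatHomologyIso.inv hcl) = 0 := iso_inj (P.isoExt 1 M).symm _ hx
    have h1b : S.moduleCatHomologyIso.inv hcl = 0 :=
      iso_inj (K.homologyIsoSc' 0 1 2 (by simp) (by simp)).symm _ h1a
    have h1 : hcl = 0 := iso_inj S.moduleCatHomologyIso.symm _ h1b
    have h1' : Submodule.Quotient.mk (p := LinearMap.range S.moduleCatToCycles) mcyc = 0 := by
      rw [← Submodule.mkQ_apply]; exact h1
    have h3 : mcyc ∈ LinearMap.range S.moduleCatToCycles :=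
      (Submodule.Quotient.mk_eq_zero _).1 h1'
    obtain ⟨(t : P.complex.X 0 ⟶ M), ht⟩ := h3
    have ht' : P.complex.d 1 0 ≫ t = m := by
      have h4 := congrArg Subtype.val ht
      have h5 : (S.moduleCatToCycles t).val = S.f t := rfl
      have h6 : mcyc.val = m := rfl
      rw [h5, hSf] at h4
      exact h4.trans h6
    have hr : P.complex.d 1 0 ≫ (k - t ≫ f) = 0 := by
      rw [Preadditive.comp_sub]
      rw [show P.complex.d 1 0 ≫ k = d₁ ≫ k from rfl, ← hm', ← Category.assoc, ht', sub_self]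
    obtain ⟨(s : E₁ ⟶ E₀), hs⟩ := CokernelCofork.IsColimit.desc' P.isColimitCokernelCofork (k - t ≫ f) hr
    have hs' : p ≫ s = k - t ≫ f := hs
    haveI : Epi p := inferInstanceAs (Epi (P.π.f 0))
    refine ⟨s, ?_⟩
    rw [← cancel_epi p, ← Category.assoc, hs', Preadditive.sub_comp, hk,
      Category.assoc, w, comp_zero, sub_zero, Category.comp_id]
  -- Now show `x = 0` using the hypothesis `hc`.
  have hx0 : x = 0 := by
    set N : ℕ → RMod R := fun _ => E₁ with hN
    let e : ∀ _ : ℕ, E₁ ⟶ ∏ᶜ N := fun j => Pi.lift (fun i => if i = j then 𝟙 E₁ else 0)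
    have he : ∀ i j, e j ≫ Pi.π N i = if i = j then 𝟙 E₁ else 0 := by
      intro i j; simp [e]
    let c : (∐ N) ⟶ ∏ᶜ N := Sigma.desc e
    have hci : ∀ j, Sigma.ι N j ≫ c = e j := fun j => colimit.ι_desc _ _
    -- `c` is a monomorphism.
    haveI hmono : Mono c := by
      rw [ModuleCat.mono_iff_injective]
      have hcomp : ∀ i : ℕ,
          (ModuleCat.coprodIsoDirectSum N).hom ≫
            (ModuleCat.ofHom (DirectSum.component Rᵐᵒᵖ ℕ (fun i => (N i : Type)) i) :
              ModuleCat.of Rᵐᵒᵖ (DirectSum ℕ (fun i => (N i : Type))) ⟶ N i) = c ≫ Pi.π N i := by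
        intro i
        apply Sigma.hom_ext
        intro j
        rw [← Category.assoc, ModuleCat.ι_coprodIsoDirectSum_hom, ← Category.assoc, hci, he]
        ext b
        show DirectSum.component Rᵐᵒᵖ ℕ (fun i => (N i : Type)) i
          (DirectSum.lof Rᵐᵒᵖ ℕ (fun i => (N i : Type)) j b) = (if i = j then 𝟙 E₁ else 0) b
        rw [DirectSum.component.of]
        by_cases hij : j = i
        · subst hij
          rw [dif_pos rfl, if_pos rfl]
          rfl
        · rw [dif_neg hij, if_neg (fun h => hij h.symm)]
          rfl
      have hker : ∀ z : ((∐ N : RMod R) : Type), c z = 0 → z = 0 := by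
        intro z hz
        have hd : ((ModuleCat.coprodIsoDirectSum N).hom z : DirectSum ℕ (fun i => (N i : Type))) = 0 := by
          apply DirectSum.ext
          intro i
          have h7 := ConcreteCategory.congr_hom (hcomp i) z
          show DirectSum.component Rᵐᵒᵖ ℕ (fun i => (N i : Type)) i
            ((ModuleCat.coprodIsoDirectSum N).hom z) = _
          rw [show (DirectSum.component Rᵐᵒᵖ ℕ (fun i => (N i : Type)) i)
              ((ModuleCat.coprodIsoDirectSum N).hom z)
              = ((ModuleCat.coprodIsoDirectSum N).hom ≫
                (ModuleCat.ofHom (DirectSum.component Rᵐᵒᵖ ℕ (fun i => (N i : Type)) i) :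
                  ModuleCat.of Rᵐᵒᵖ (DirectSum ℕ (fun i => (N i : Type))) ⟶ N i)) z from rfl, hcomp i]
          show (Pi.π N i) (c z) = _
          rw [hz, map_zero]
          rfl
        calc z = ((ModuleCat.coprodIsoDirectSum N).hom ≫ (ModuleCat.coprodIsoDirectSum N).inv) z
              := by rw [Iso.hom_inv_id]; rfl
          _ = (ModuleCat.coprodIsoDirectSum N).inv ((ModuleCat.coprodIsoDirectSum N).hom z)
              := rfl
          _ = (ModuleCat.coprodIsoDirectSum N).inv 0 := by
              exact congrArg _ hd
          _ = 0 := map_zero _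
      intro z₁ z₂ hz
      have h8 : c (z₁ - z₂) = 0 := by rw [map_sub, hz, sub_self]
      have h9 := hker _ h8
      exact sub_eq_zero.mp h9
    let σ : (∐ N) ⟶ E₁ := Sigma.desc (fun _ => 𝟙 E₁)
    let H : (∏ᶜ N) ⟶ E₁ := Injective.factorThru σ c
    have hcH : c ≫ H = σ := Injective.comp_factorThru σ c
    have heH : ∀ j, e j ≫ H = 𝟙 E₁ := by
      intro j
      rw [← hci, Category.assoc, hcH]
      simp [σ]
    let Ξ : F.obj (op (∏ᶜ N)) := F.map H.op x
    let G : ℕ → ModuleCat ℤ := fun i => F.obj (op (N i))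
    let Φ : (∐ G) ⟶ F.obj (op (∏ᶜ N)) :=
      Sigma.desc (fun i => F.map ((Pi.π N i).op))
    haveI : IsIso Φ := hc N
    let ω := CategoryTheory.inv Φ Ξ
    have hΦω : Φ ω = Ξ := by
      show (CategoryTheory.inv Φ ≫ Φ) Ξ = Ξ
      rw [IsIso.inv_hom_id]
      rfl
    let dω : DirectSum ℕ (fun i => (G i : Type)) := (ModuleCat.coprodIsoDirectSum G).hom ω
    have hω : ω = (ModuleCat.coprodIsoDirectSum G).inv dω := by
      show ω = ((ModuleCat.coprodIsoDirectSum G).hom ≫ (ModuleCat.coprodIsoDirectSum G).inv) ω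
      rw [Iso.hom_inv_id]
      rfl
    obtain ⟨j, hj⟩ := Infinite.exists_notMem_finset (DFinsupp.support dω)
    -- Compute `F.map (e j).op Ξ` in two ways.
    have key1 : F.map (e j).op Ξ = x := by
      show (F.map H.op ≫ F.map (e j).op) x = x
      rw [← F.map_comp, ← op_comp, heH j, op_id, F.map_id]
      rfl
    have key2 : F.map (e j).op Ξ = 0 := by
      have hsum : dω = ∑ i ∈ dω.support, (DirectSum.of (fun i => (G i : Type)) i) (dω i) :=
        (DirectSum.sum_support_of dω).symm
      let L := (ModuleCat.coprodIsoDirectSum G).inv ≫ Φ ≫ F.map (e j).op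
      have hL : F.map (e j).op Ξ = L dω := by
        rw [← hΦω, hω]
        rfl
      rw [hL, hsum, map_sum]
      refine Finset.sum_eq_zero ?_
      intro i hi
      have hij : i ≠ j := fun h => hj (h ▸ hi)
      have h1 : L ((DirectSum.of (fun i => (G i : Type)) i) (dω i))
          = F.map (e j).op (Φ (Sigma.ι G i (dω i))) := by
        have hlof := ConcreteCategory.congr_hom (ModuleCat.lof_coprodIsoDirectSum_inv (ι := ℕ) G i) (dω i)
        exact congrArg (fun v => F.map (e j).op (Φ v)) hlof
      have h2 : Φ (Sigma.ι G i (dω i)) = F.map ((Pi.π N i).op) (dω i) := by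
        show (Sigma.ι G i ≫ Φ) (dω i) = _
        rw [show Sigma.ι G i ≫ Φ = F.map ((Pi.π N i).op) from colimit.ι_desc _ _]
      rw [h1, h2]
      have h3 : F.map (e j).op (F.map ((Pi.π N i).op) (dω i))
          = F.map ((e j ≫ Pi.π N i).op) (dω i) := by
        rw [op_comp, F.map_comp]
        rfl
      rw [h3, he i j, if_neg hij]
      exact hzero _ _ _
    rw [← key1, key2]
  obtain ⟨s, hsg⟩ := split hx0
  -- `f` has a retraction `q`, so `M` is a retract of the injective `E₀`.
  have hsg0 : (𝟙 E₀ - g ≫ s) ≫ g = 0 := by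
    rw [Preadditive.sub_comp, Category.id_comp, Category.assoc, hsg, Category.comp_id, sub_self]
  obtain ⟨q, hq⟩ := KernelFork.IsLimit.lift' hexact.fIsKernel (𝟙 E₀ - g ≫ s) hsg0
  have hq' : q ≫ f = 𝟙 E₀ - g ≫ s := by simpa using hq
  have hfq : f ≫ q = 𝟙 M := by
    rw [← cancel_mono f, Category.assoc, hq', Preadditive.comp_sub, Category.comp_id,
      ← Category.assoc, w, zero_comp, sub_zero, Category.id_comp]
  constructor
  intro X Y u i hi
  obtain ⟨v, hv⟩ := hE₀.factors (u ≫ f) i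
  exact ⟨v ≫ q, by rw [← Category.assoc, hv, Category.assoc, hfq, Category.comp_id]⟩
end
end

section
/- If M is an fp-Ω¹ right R-module, then there exists a projective module L such that M ⊕ L is isomorphic to a direct sum H ⊕ P where H is an FP₂-module and P is projective. Similarly, if M is fg-Ω¹ (resp. small-Ω¹) then M ⊕ L ≅ H ⊕ P with H finitely presented (resp. finitely generated) and P projective, for some projective L. -/
open CategoryTheory CategoryTheory.Limits Opposite

noncomputable section

/-- Any homomorphism from a finitely generated module to a free module factors through
finitely many coordinates. -/
lemma fgFactor {A : Type} [Ring A] {K : Type} [AddCommGroup K] [Module A K]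
    (hK : Module.Finite A K) (ι : Type) (j : K →ₗ[A] (ι →₀ A)) :
    ∃ S : Finset ι, ∀ (k : K) (c : ι), c ∉ S → j k c = 0 := by
  classical
  obtain ⟨t, ht⟩ := hK.fg_top
  refine ⟨t.sup fun x => (j x).support, fun k c hc => ?_⟩
  have hsub : LinearMap.range j ≤ Finsupp.supported A A ↑(t.sup fun x => (j x).support) := by
    rw [LinearMap.range_eq_map, ← ht, Submodule.map_span, Submodule.span_le]
    rintro y ⟨x, hx, rfl⟩
    rw [SetLike.mem_coe, Finsupp.mem_supported]
    intro c hc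
    exact Finset.mem_coe.2 (Finset.mem_of_subset (Finset.le_sup hx) hc)
  have := hsub (LinearMap.mem_range_self j k)
  rw [Finsupp.mem_supported'] at this
  exact this c (by simpa using hc)

/-- Any homomorphism from a small module to a free module factors through
finitely many coordinates. -/
lemma smallFactor {R : Type} [Ring R] (K : RMod R) (h : IsSmallModule R K) (ι : Type)
    (j : ↥K →ₗ[Rᵐᵒᵖ] (ι →₀ Rᵐᵒᵖ)) :
    ∃ S : Finset ι, ∀ (k : ↥K) (c : ι), c ∉ S → j k c = 0 := by
  classical
  let Z : ι → RMod R := fun _ => ModuleCat.of Rᵐᵒᵖ Rᵐᵒᵖ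
  have hcc := ModuleCat.coproductCoconeIsColimit Z
  haveI := h ι
  have hc2 : IsColimit ((preadditiveCoyoneda.obj (op K)).mapCocone
      (ModuleCat.coproductCocone Z)) :=
    isColimitOfPreserves _ hcc
  let T : AddSubgroup (↥K →ₗ[Rᵐᵒᵖ] (DirectSum ι fun _ : ι => Rᵐᵒᵖ)) :=
    { carrier := {f | ∃ S : Finset ι, ∀ (k : ↥K) (c : ι), c ∉ S → f k c = 0}
      zero_mem' := ⟨∅, fun k c _ => rfl⟩
      add_mem' := by
        rintro f g ⟨S₁, h₁⟩ ⟨S₂, h₂⟩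
        refine ⟨S₁ ∪ S₂, fun k c hc => ?_⟩
        have hc1 : c ∉ S₁ := fun hx => hc (Finset.mem_union_left _ hx)
        have hc2 : c ∉ S₂ := fun hx => hc (Finset.mem_union_right _ hx)
        show (f k + g k) c = 0
        rw [DirectSum.add_apply, h₁ k c hc1, h₂ k c hc2, add_zero]
      neg_mem' := by
        rintro f ⟨S₁, h₁⟩
        refine ⟨S₁, fun k c hc => ?_⟩
        show (-(f k)) c = 0
        rw [DFinsupp.neg_apply, h₁ k c hc, neg_zero] }
  let q : (preadditiveCoyoneda.obj (op K)).obj (ModuleCat.coproductCocone Z).pt ⟶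
      AddCommGrpCat.of ((↥K →ₗ[Rᵐᵒᵖ] (DirectSum ι fun _ : ι => Rᵐᵒᵖ)) ⧸ T) :=
    AddCommGrpCat.ofHom ((QuotientAddGroup.mk' T).comp ModuleCat.homAddEquiv.toAddMonoidHom)
  have hq : q = 0 := by
    apply hc2.hom_ext
    rintro ⟨i⟩
    ext f
    let f' : ↥K →ₗ[Rᵐᵒᵖ] Rᵐᵒᵖ := f.hom
    show QuotientAddGroup.mk' T
      ((DirectSum.lof Rᵐᵒᵖ ι (fun _ => Rᵐᵒᵖ) i) ∘ₗ f') = 0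
    rw [QuotientAddGroup.mk'_apply, QuotientAddGroup.eq_zero_iff]
    refine ⟨{i}, fun k c hc => ?_⟩
    show (DirectSum.lof Rᵐᵒᵖ ι (fun _ => Rᵐᵒᵖ) i (f' k)) c = 0
    rw [DirectSum.lof_eq_of, DirectSum.of_eq_of_ne]
    exact fun he => hc (he ▸ Finset.mem_singleton_self i)
  let e := finsuppLEquivDirectSum Rᵐᵒᵖ Rᵐᵒᵖ ι
  have hj : (e.toLinearMap ∘ₗ j) ∈ T := by
    have h0 : QuotientAddGroup.mk' T (e.toLinearMap ∘ₗ j) = 0 := by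
      rw [show (QuotientAddGroup.mk' T) (e.toLinearMap ∘ₗ j)
        = q (ModuleCat.ofHom (e.toLinearMap ∘ₗ j)) from rfl, hq]
      rfl
    rwa [QuotientAddGroup.mk'_apply, QuotientAddGroup.eq_zero_iff] at h0
  obtain ⟨S, hS⟩ := hj
  refine ⟨S, fun k c hc => ?_⟩
  have := hS k c hc
  rwa [show ((e.toLinearMap ∘ₗ j) k) c = j k c from congrFun (Finsupp.toDFinsupp_coe (j k)) c]
    at this

/-- The main decomposition: if `M` is `Q`-Ω¹ and every map from a `Q`-module into a free
module factors through finitely many coordinates, then `M ⊕ L ≅ (F/K) ⊕ P'` with `F`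
finite free, `L, P'` projective, and `K` satisfying `Q`. -/
lemma mainDecomp {R : Type} [Ring R] (M : RMod R) (Q : RMod R → Prop)
    (h : IsOmega1 R Q M)
    (hfac : ∀ (K : RMod R), Q K → ∀ (ι : Type) (j : ↥K →ₗ[Rᵐᵒᵖ] (ι →₀ Rᵐᵒᵖ)),
      ∃ S : Finset ι, ∀ (k : ↥K) (c : ι), c ∉ S → j k c = 0) :
    ∃ (K : RMod R) (ι : Type) (S : Set ι) (_ : Fintype ↥S)
      (f : ↥K →ₗ[Rᵐᵒᵖ] (↥S →₀ Rᵐᵒᵖ)) (L P' : RMod R),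
      Q K ∧ Function.Injective f ∧ Projective L ∧ Projective P' ∧
      Nonempty ((M ⊞ L) ≅
        ((ModuleCat.of Rᵐᵒᵖ ((↥S →₀ Rᵐᵒᵖ) ⧸ LinearMap.range f)) ⊞ P')) := by
  classical
  obtain ⟨K, P, i, p, w, hi, hp, hex, hP, hQK⟩ := h
  have hPm : Module.Projective Rᵐᵒᵖ ↥P := by
    rw [IsProjective.iff_projective]
    exact hP
  obtain ⟨s, hs⟩ := Module.projective_def'.mp hPm
  set ι : Type := ↥P with hι
  set π : (ι →₀ Rᵐᵒᵖ) →ₗ[Rᵐᵒᵖ] ↥P := Finsupp.linearCombination Rᵐᵒᵖ id with hπ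
  have hπs : ∀ x : ↥P, π (s x) = x := fun x => DFunLike.congr_fun hs x
  set j : ↥K →ₗ[Rᵐᵒᵖ] (ι →₀ Rᵐᵒᵖ) := s ∘ₗ i.hom with hj
  obtain ⟨S₀, hS⟩ := hfac K hQK ι j
  set S : Set ι := ↑S₀ with hSdef
  haveI : Fintype ↥S := S₀.finite_toSet.fintype
  set E : (ι →₀ Rᵐᵒᵖ) ≃ₗ[Rᵐᵒᵖ] (↥S →₀ Rᵐᵒᵖ) × (↥(Sᶜ) →₀ Rᵐᵒᵖ) :=
    (Finsupp.domLCongr (Equiv.Set.sumCompl S).symm).trans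
      (Finsupp.sumFinsuppLEquivProdFinsupp Rᵐᵒᵖ) with hE
  have hE1 : ∀ (x : ι →₀ Rᵐᵒᵖ) (a : ↥S), (E x).1 a = x ↑a := by
    intro x a
    simp [hE, Finsupp.domLCongr_apply, Finsupp.fst_sumFinsuppLEquivProdFinsupp,
      Finsupp.equivMapDomain_apply]
  have hE2 : ∀ (x : ι →₀ Rᵐᵒᵖ) (c : ↥(Sᶜ)), (E x).2 c = x ↑c := by
    intro x c
    simp [hE, Finsupp.domLCongr_apply, Finsupp.snd_sumFinsuppLEquivProdFinsupp,
      Finsupp.equivMapDomain_apply]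
  set f : ↥K →ₗ[Rᵐᵒᵖ] (↥S →₀ Rᵐᵒᵖ) :=
    (LinearMap.fst Rᵐᵒᵖ _ _) ∘ₗ (E.toLinearMap ∘ₗ j) with hf
  have hsinj : Function.Injective s :=
    Function.LeftInverse.injective hπs
  have hiinj : Function.Injective i := (ModuleCat.mono_iff_injective i).mp hi
  have hjinj : Function.Injective j := hsinj.comp hiinj
  have hjc : ∀ (k : ↥K) (c : ↥(Sᶜ)), (E (j k)).2 c = 0 := by
    intro k c
    rw [hE2]
    exact hS k ↑c (fun hmem => c.2 (Finset.mem_coe.mp hmem))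
  have hfinj : Function.Injective f := by
    intro a b hab
    apply hjinj
    apply E.injective
    refine Prod.ext hab (Finsupp.ext fun c => ?_)
    rw [hjc, hjc]
  -- the complement L
  set L0 : Submodule Rᵐᵒᵖ (ι →₀ Rᵐᵒᵖ) := LinearMap.ker π with hL0
  set r : (ι →₀ Rᵐᵒᵖ) →ₗ[Rᵐᵒᵖ] ↥L0 :=
    (LinearMap.id - s ∘ₗ π).codRestrict L0
      (fun x => by simp [hL0, LinearMap.mem_ker, map_sub, hπs]) with hr
  have hrval : ∀ x : ι →₀ Rᵐᵒᵖ, (r x : ι →₀ Rᵐᵒᵖ) = x - s (π x) := fun x => rfl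
  have hrs : ∀ l : ↥L0, r ↑l = l := by
    intro l
    apply Subtype.ext
    rw [hrval]
    have : π (l : ι →₀ Rᵐᵒᵖ) = 0 := l.2
    rw [this, map_zero, sub_zero]
  have hLproj : Module.Projective Rᵐᵒᵖ ↥L0 :=
    Module.Projective.of_split L0.subtype r (LinearMap.ext fun l => hrs l)
  set L : RMod R := ModuleCat.of Rᵐᵒᵖ ↥L0
  set P' : RMod R := ModuleCat.of Rᵐᵒᵖ (↥(Sᶜ) →₀ Rᵐᵒᵖ)
  -- Ψ : F → M × L
  set Ψ : (ι →₀ Rᵐᵒᵖ) →ₗ[Rᵐᵒᵖ] (↥M × ↥L0) :=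
    LinearMap.prod (p.hom ∘ₗ π) r with hΨ
  have hpsurj : Function.Surjective p := (ModuleCat.epi_iff_surjective p).mp hp
  have hrange : LinearMap.range i.hom = LinearMap.ker p.hom :=
    hex.moduleCat_range_eq_ker
  have hΨsurj : Function.Surjective Ψ := by
    rintro ⟨m, l⟩
    obtain ⟨a, ha⟩ := hpsurj m
    refine ⟨s a + ↑l, ?_⟩
    have hπl : π (l : ι →₀ Rᵐᵒᵖ) = 0 := l.2
    have hπx : π (s a + ↑l) = a := by rw [map_add, hπs, hπl, add_zero]
    refine Prod.ext ?_ ?_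
    · show p (π (s a + ↑l)) = m
      rw [hπx, ha]
    · show r (s a + ↑l) = l
      apply Subtype.ext
      rw [hrval, hπx]
      abel
  have hπj : ∀ k, π (j k) = i k := by
    intro k
    show π (s (i k)) = i k
    rw [hπs]
  have hpi : ∀ k : ↥K, p (i k) = 0 := fun k => congrArg (fun φ : K ⟶ M => φ.hom k) w
  have hΨker : LinearMap.ker Ψ = LinearMap.range j := by
    ext x
    constructor
    · intro hx
      rw [LinearMap.mem_ker] at hx
      have h1 : p (π x) = 0 := congrArg Prod.fst hx
      have h2 : r x = 0 := congrArg Prod.snd hx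
      have hπx : π x ∈ LinearMap.ker p.hom := h1
      rw [← hrange] at hπx
      obtain ⟨k, hk⟩ := hπx
      have hx2 : x = s (π x) := by
        have := congrArg Subtype.val h2
        rw [hrval] at this
        have : x - s (π x) = 0 := this
        rwa [sub_eq_zero] at this
      exact ⟨k, by rw [hx2, ← hk]; rfl⟩
    · rintro ⟨k, rfl⟩
      rw [LinearMap.mem_ker]
      refine Prod.ext ?_ ?_
      · show p (π (j k)) = 0
        rw [hπj, hpi]
      · show r (j k) = 0
        apply Subtype.ext
        rw [hrval, hπj]
        show s (i k) - s (i k) = 0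
        rw [sub_self]
  -- Φ : F → H × P'
  set H0 : Type := (↥S →₀ Rᵐᵒᵖ) ⧸ LinearMap.range f with hH0
  set Φ : (ι →₀ Rᵐᵒᵖ) →ₗ[Rᵐᵒᵖ] (H0 × (↥(Sᶜ) →₀ Rᵐᵒᵖ)) :=
    LinearMap.prod ((LinearMap.range f).mkQ ∘ₗ ((LinearMap.fst Rᵐᵒᵖ _ _) ∘ₗ E.toLinearMap))
      ((LinearMap.snd Rᵐᵒᵖ _ _) ∘ₗ E.toLinearMap) with hΦ
  have hΦsurj : Function.Surjective Φ := by
    rintro ⟨hq, y⟩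
    obtain ⟨z, rfl⟩ := (LinearMap.range f).mkQ_surjective hq
    refine ⟨E.symm (z, y), Prod.ext ?_ ?_⟩
    · show (LinearMap.range f).mkQ (E (E.symm (z, y))).1 = _
      rw [E.apply_symm_apply]
    · show (E (E.symm (z, y))).2 = y
      rw [E.apply_symm_apply]
  have hΦker : LinearMap.ker Φ = LinearMap.range j := by
    ext x
    constructor
    · intro hx
      rw [LinearMap.mem_ker] at hx
      have h1 : (LinearMap.range f).mkQ (E x).1 = 0 := congrArg Prod.fst hx
      have h2 : (E x).2 = 0 := congrArg Prod.snd hx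
      rw [Submodule.mkQ_apply, Submodule.Quotient.mk_eq_zero] at h1
      obtain ⟨k, hk⟩ := h1
      have : E x = E (j k) := by
        refine Prod.ext ?_ (Finsupp.ext fun c => ?_)
        · rw [← hk]; rfl
        · rw [hjc, h2]; rfl
      exact ⟨k, (E.injective this).symm⟩
    · rintro ⟨k, rfl⟩
      rw [LinearMap.mem_ker]
      refine Prod.ext ?_ (Finsupp.ext fun c => ?_)
      · show (LinearMap.range f).mkQ (E (j k)).1 = 0
        rw [Submodule.mkQ_apply, Submodule.Quotient.mk_eq_zero]
        exact ⟨k, rfl⟩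
      · show (E (j k)).2 c = 0
        rw [hjc]
  -- assemble
  have eq : (↥M × ↥L0) ≃ₗ[Rᵐᵒᵖ] (H0 × (↥(Sᶜ) →₀ Rᵐᵒᵖ)) :=
    ((LinearMap.quotKerEquivOfSurjective (M := ι →₀ Rᵐᵒᵖ) (M₂ := ↥M × ↥L0) Ψ hΨsurj).symm.trans
      (Submodule.quotEquivOfEq _ _ (hΨker.trans hΦker.symm))).trans
      (Φ.quotKerEquivOfSurjective hΦsurj)
  refine ⟨K, ι, S, inferInstance, f, L, P', hQK, hfinj, ?_, ?_, ?_⟩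
  · rw [← IsProjective.iff_projective]
    exact hLproj
  · rw [← IsProjective.iff_projective]
    infer_instance
  · exact ⟨(ModuleCat.biprodIsoProd M L).trans
      ((eq.toModuleIso).trans
        (ModuleCat.biprodIsoProd (ModuleCat.of Rᵐᵒᵖ H0) P').symm)⟩

theorem omega1_direct_sum_decomposition (R : Type) [Ring R] (M : RMod R) :
    (IsOmega1 R (fun K => Module.FinitePresentation Rᵐᵒᵖ K) M →
      ∃ (L H P : RMod R), Projective L ∧ IsFP2 R H ∧ Projective P ∧
        Nonempty ((M ⊞ L) ≅ (H ⊞ P))) ∧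
    (IsOmega1 R (fun K => Module.Finite Rᵐᵒᵖ K) M →
      ∃ (L H P : RMod R), Projective L ∧ Module.FinitePresentation Rᵐᵒᵖ H ∧ Projective P ∧
        Nonempty ((M ⊞ L) ≅ (H ⊞ P))) ∧
    (IsOmega1 R (fun K => IsSmallModule R K) M →
      ∃ (L H P : RMod R), Projective L ∧ Module.Finite Rᵐᵒᵖ H ∧ Projective P ∧
        Nonempty ((M ⊞ L) ≅ (H ⊞ P))) := by
  refine ⟨?_, ?_, ?_⟩
  · -- fp-Ω¹ case
    intro h
    obtain ⟨K, ι, S, hFT, f, L, P', hQK, hfinj, hL, hP', ⟨iso⟩⟩ :=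
      mainDecomp M _ h (fun K hK ι j => fgFactor (by haveI := hK; infer_instance) ι j)
    haveI : Fintype ↥S := hFT
    haveI : Module.FinitePresentation Rᵐᵒᵖ ↥K := hQK
    refine ⟨L, ModuleCat.of Rᵐᵒᵖ ((↥S →₀ Rᵐᵒᵖ) ⧸ LinearMap.range f), P', hL, ?_, hP', ⟨iso⟩⟩
    -- build the FP₂ structure
    obtain ⟨sK, hspan, hker⟩ := ‹Module.FinitePresentation Rᵐᵒᵖ ↥K›.out
    set d : (↥sK →₀ Rᵐᵒᵖ) →ₗ[Rᵐᵒᵖ] ↥K :=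
      Finsupp.linearCombination Rᵐᵒᵖ ((↑) : ↥sK → ↥K) with hd
    have hdsurj : Function.Surjective d := by
      rw [← LinearMap.range_eq_top, hd, Finsupp.range_linearCombination, Subtype.range_val,
        ← hspan]
    obtain ⟨t, ht⟩ := hker
    set g : (↥t →₀ Rᵐᵒᵖ) →ₗ[Rᵐᵒᵖ] (↥sK →₀ Rᵐᵒᵖ) :=
      Finsupp.linearCombination Rᵐᵒᵖ ((↑) : ↥t → (↥sK →₀ Rᵐᵒᵖ)) with hg
    have hgrange : LinearMap.range g = LinearMap.ker d := by
      rw [hg, Finsupp.range_linearCombination, Subtype.range_val, ← ht]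
    refine ⟨ModuleCat.of Rᵐᵒᵖ (↥t →₀ Rᵐᵒᵖ), ModuleCat.of Rᵐᵒᵖ (↥sK →₀ Rᵐᵒᵖ),
      ModuleCat.of Rᵐᵒᵖ (↥S →₀ Rᵐᵒᵖ), ModuleCat.ofHom g, ModuleCat.ofHom (f ∘ₗ d),
      ModuleCat.ofHom (LinearMap.range f).mkQ, ?_, ?_,
      ?_, ?_, ?_, ?_, ?_, ?_, ?_, ?_, ?_⟩
    · refine ModuleCat.hom_ext (LinearMap.ext fun x => ?_)
      show f (d (g x)) = 0
      have hx : g x ∈ LinearMap.ker d := hgrange ▸ LinearMap.mem_range_self g x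
      rw [LinearMap.mem_ker.mp hx, map_zero]
    · refine ModuleCat.hom_ext (LinearMap.ext fun x => ?_)
      show (LinearMap.range f).mkQ (f (d x)) = 0
      rw [Submodule.mkQ_apply, Submodule.Quotient.mk_eq_zero]
      exact LinearMap.mem_range_self f (d x)
    · rw [← IsProjective.iff_projective]; infer_instance
    · rw [← IsProjective.iff_projective]; infer_instance
    · rw [← IsProjective.iff_projective]; infer_instance
    · show Module.Finite Rᵐᵒᵖ (↥t →₀ Rᵐᵒᵖ); infer_instance
    · show Module.Finite Rᵐᵒᵖ (↥sK →₀ Rᵐᵒᵖ); infer_instance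
    · show Module.Finite Rᵐᵒᵖ (↥S →₀ Rᵐᵒᵖ); infer_instance
    · rw [ModuleCat.epi_iff_surjective]
      exact (LinearMap.range f).mkQ_surjective
    · rw [ShortComplex.moduleCat_exact_iff]
      intro x hx
      have hdx : d x = 0 := hfinj (by
        show f (d x) = f 0
        rw [map_zero]
        exact hx)
      have hxk : x ∈ LinearMap.ker d := hdx
      obtain ⟨y, hy2⟩ := (hgrange.symm.le : LinearMap.ker d ≤ LinearMap.range g) hxk
      exact ⟨y, hy2⟩
    · rw [ShortComplex.moduleCat_exact_iff]
      intro y hy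
      have hy' : (LinearMap.range f).mkQ y = 0 := hy
      rw [Submodule.mkQ_apply, Submodule.Quotient.mk_eq_zero] at hy'
      obtain ⟨k, hk⟩ := hy'
      obtain ⟨x, rfl⟩ := hdsurj k
      exact ⟨x, hk⟩
  · -- fg-Ω¹ case
    intro h
    obtain ⟨K, ι, S, hFT, f, L, P', hQK, hfinj, hL, hP', ⟨iso⟩⟩ :=
      mainDecomp M _ h (fun K hK ι j => fgFactor hK ι j)
    haveI : Fintype ↥S := hFT
    haveI : Module.Finite Rᵐᵒᵖ ↥K := hQK
    refine ⟨L, ModuleCat.of Rᵐᵒᵖ ((↥S →₀ Rᵐᵒᵖ) ⧸ LinearMap.range f), P', hL, ?_, hP', ⟨iso⟩⟩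
    have hfg : (LinearMap.range f).FG := by
      rw [← Submodule.map_top]
      exact Submodule.FG.map f Module.Finite.fg_top
    exact Module.finitePresentation_of_surjective (LinearMap.range f).mkQ
      (LinearMap.range f).mkQ_surjective
      (by rw [Submodule.ker_mkQ]; exact hfg)
  · -- small-Ω¹ case
    intro h
    obtain ⟨K, ι, S, hFT, f, L, P', hQK, hfinj, hL, hP', ⟨iso⟩⟩ :=
      mainDecomp M _ h (fun K hK ι j => smallFactor K hK ι j)
    haveI : Fintype ↥S := hFT
    refine ⟨L, ModuleCat.of Rᵐᵒᵖ ((↥S →₀ Rᵐᵒᵖ) ⧸ LinearMap.range f), P', hL, ?_, hP', ⟨iso⟩⟩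
    exact Module.Finite.of_surjective (LinearMap.range f).mkQ
      (LinearMap.range f).mkQ_surjective
end
end

section
/- Let R be a right hereditary ring and M a right R-module. If there is a projective module L with M ⊕ L ≅ F ⊕ U where F is finitely presented and U is projective, then M ≅ N ⊕ P with N finitely presented and P projective. -/
open CategoryTheory CategoryTheory.Limits Opposite

noncomputable section

set_option maxHeartbeats 1000000
set_option synthInstance.maxHeartbeats 400000

theorem kaplansky_finsupp {S : Type} [Ring S]
    (hid : ∀ I : Ideal S, Module.Projective S ↥I)
    {ι : Type} [LinearOrder ι] [WellFoundedLT ι] (N : Submodule S (ι →₀ S)) :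
    Module.Projective S ↥N := by
  classical
  set A : ι → Submodule S (ι →₀ S) :=
    fun i => N ⊓ Finsupp.supported S S {j | j ≤ i} with hA
  set f : ∀ i, ↥(A i) →ₗ[S] S :=
    fun i => (Finsupp.lapply i).comp (A i).subtype with hf
  set I : ι → Ideal S := fun i => LinearMap.range (f i) with hI
  set q : ∀ i, ↥(A i) →ₗ[S] ↥(I i) := fun i => (f i).rangeRestrict with hq'
  have hq : ∀ i, Function.Surjective (q i) := fun i => (f i).surjective_rangeRestrict
  have hexσ : ∀ i, ∃ σ : ↥(I i) →ₗ[S] ↥(A i), (q i).comp σ = LinearMap.id := by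
    intro i
    haveI := hid (I i)
    exact Module.projective_lifting_property (q i) LinearMap.id (hq i)
  choose σ hσ using hexσ
  -- evaluation facts
  have hevalA : ∀ i (a : ↥(A i)), (a : ι →₀ S) i = ((q i) a : S) := by
    intro i a; rfl
  have hsuppA : ∀ i (a : ↥(A i)) (j : ι), i < j → (a : ι →₀ S) j = 0 := by
    intro i a j hij
    by_contra h
    exact absurd (a.2.2 (Finsupp.mem_support_iff.mpr h)) (not_le.mpr hij)
  have hqσ : ∀ i (y : ↥(I i)), q i (σ i y) = y := fun i y =>
    congrFun (congrArg (fun g => g.toFun) (hσ i)) y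
  -- the assembled map
  set Φ : (Π₀ i, ↥(I i)) →ₗ[S] (ι →₀ S) :=
    DFinsupp.lsum ℕ (fun i => (A i).subtype ∘ₗ σ i) with hΦ
  have hΦsingle : ∀ (i : ι) (y : ↥(I i)), Φ (DFinsupp.single i y) = ((σ i y : ↥(A i)) : ι →₀ S) := by
    intro i y
    simp [hΦ]
  have hΦsum : ∀ x : Π₀ i, ↥(I i),
      Φ x = ∑ j ∈ DFinsupp.support x, ((σ j (x j) : ↥(A j)) : ι →₀ S) := by
    intro x
    rw [hΦ, DFinsupp.lsum_apply_apply, DFinsupp.sumAddHom_apply]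
    rfl
  -- range Φ ≤ N
  have hΦle : ∀ x, Φ x ∈ N := by
    intro x
    rw [hΦsum]
    exact N.sum_mem fun j _ => (σ j (x j)).2.1
  -- range Φ ⊇ N
  have main : ∀ n : ι →₀ S, n ∈ N → ∃ x, Φ x = n := by
    have ind : ∀ i : ι, ∀ n : ι →₀ S, n ∈ N → (↑n.support ⊆ {j | j ≤ i}) →
        ∃ x, Φ x = n := by
      intro i
      induction i using WellFoundedLT.induction with
      | ind i IH =>
        intro n hn hsupp
        set a : ↥(A i) := ⟨n, hn, hsupp⟩ with ha
        set c : ↥(A i) := σ i (q i a) with hc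
        set n' : ι →₀ S := n - (c : ι →₀ S) with hn'
        have hn'N : n' ∈ N := N.sub_mem hn c.2.1
        have hn'i : n' i = 0 := by
          have h1 : (c : ι →₀ S) i = ((q i) a : S) := by
            rw [hevalA i c, hc, hqσ]
          have h2 : n i = ((q i) a : S) := hevalA i a
          simp [hn', h1, h2]
        have hn'supp : ↑n'.support ⊆ {j | j < i} := by
          intro j hj
          have hj' : n' j ≠ 0 := Finsupp.mem_support_iff.mp hj
          have hle : j ≤ i := by
            by_contra h
            have h3 := hsuppA i c j (not_le.mp h)
            have hnj : n j = 0 := by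
              by_contra h2
              exact absurd (hsupp (Finsupp.mem_support_iff.mpr h2)) h
            simp [hn', Finsupp.sub_apply, hnj, h3] at hj'
          rcases lt_or_eq_of_le hle with h | h
          · exact h
          · exact absurd (h ▸ hn'i) hj'
        have hn'mem : ∃ x, Φ x = n' := by
          rcases eq_or_ne n' 0 with h | h
          · exact ⟨0, by simp [h]⟩
          · have hne : n'.support.Nonempty := Finsupp.support_nonempty_iff.mpr h
            have hi'lt : n'.support.max' hne < i := hn'supp (n'.support.max'_mem hne)
            exact IH _ hi'lt n' hn'N (fun j hj => Finset.le_max' _ j hj)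
        rcases hn'mem with ⟨x, hx⟩
        refine ⟨x + DFinsupp.single i (q i a), ?_⟩
        rw [map_add, hx, hΦsingle]
        rw [← hc]
        simp [hn']
    intro n hn
    rcases eq_or_ne n 0 with h | h
    · exact ⟨0, by simp [h]⟩
    · have hne : n.support.Nonempty := Finsupp.support_nonempty_iff.mpr h
      exact ind (n.support.max' hne) n hn (fun j hj => Finset.le_max' _ j hj)
  -- injectivity of Φ
  have hinj : Function.Injective Φ := by
    suffices h0 : ∀ z : Π₀ i, ↥(I i), Φ z = 0 → z = 0 by
      intro x y hxy
      have := h0 (x - y) (by rw [map_sub, hxy, sub_self])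
      exact sub_eq_zero.mp this
    intro x hx
    by_contra hne
    have hsne : (DFinsupp.support x).Nonempty := by
      rw [Finset.nonempty_iff_ne_empty]
      intro h
      exact hne (DFinsupp.support_eq_empty.mp h)
    set i := (DFinsupp.support x).max' hsne with hi
    have hxi : x i ≠ 0 := DFinsupp.mem_support_iff.mp ((DFinsupp.support x).max'_mem hsne)
    have heval : (0 : S) = ∑ j ∈ DFinsupp.support x, ((σ j (x j) : ↥(A j)) : ι →₀ S) i := by
      have h1 := congrArg (fun v : ι →₀ S => v i) ((hx.symm).trans (hΦsum x))
      simpa using h1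
    have hterm : ∀ j ∈ DFinsupp.support x, j ≠ i →
        ((σ j (x j) : ↥(A j)) : ι →₀ S) i = 0 := by
      intro j hj hji
      exact hsuppA j _ i (lt_of_le_of_ne (Finset.le_max' _ j hj) hji)
    have heval2 : ((σ i (x i) : ↥(A i)) : ι →₀ S) i = 0 := by
      rw [Finset.sum_eq_single_of_mem i ((DFinsupp.support x).max'_mem hsne) hterm] at heval
      exact heval.symm
    rw [hevalA, hqσ] at heval2
    exact hxi (Subtype.ext heval2)
  -- range Φ = N, conclude
  have hrange : LinearMap.range Φ = N := by
    apply le_antisymm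
    · rintro _ ⟨x, rfl⟩; exact hΦle x
    · intro n hn
      rcases main n hn with ⟨x, hx⟩
      exact ⟨x, hx⟩
  haveI : ∀ j, Module.Projective S ↥(I j) := fun j => hid (I j)
  have equiv : (Π₀ i, ↥(I i)) ≃ₗ[S] ↥N :=
    (LinearEquiv.ofInjective Φ hinj).trans (LinearEquiv.ofEq _ _ hrange)
  exact Module.Projective.of_equiv equiv

theorem kaplansky_submodule {S : Type} [Ring S]
    (hid : ∀ I : Ideal S, Module.Projective S ↥I)
    {P : Type} [AddCommGroup P] [Module S P] (hP : Module.Projective S P)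
    (Q : Submodule S P) : Module.Projective S ↥Q := by
  classical
  letI : LinearOrder P := IsWellOrder.linearOrder WellOrderingRel
  haveI : WellFoundedLT P := ⟨WellOrderingRel.isWellOrder.wf⟩
  obtain ⟨s, hs⟩ := Module.projective_def.mp hP
  have hsinj : Function.Injective s := Function.LeftInverse.injective hs
  have e : ↥Q ≃ₗ[S] ↥(Submodule.map s Q) := Submodule.equivMapOfInjective s hsinj Q
  have := kaplansky_finsupp hid (Submodule.map s Q)
  exact Module.Projective.of_equiv e.symm

theorem split_of_projective_quotient {S : Type} [Ring S] {A B : Type}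
    [AddCommGroup A] [Module S A] [AddCommGroup B] [Module S B]
    (f : A →ₗ[S] B) (hf : Function.Surjective f) (hB : Module.Projective S B) :
    Nonempty (A ≃ₗ[S] (↥(LinearMap.ker f) × B)) := by
  obtain ⟨σ, hσ⟩ := Module.projective_lifting_property f LinearMap.id hf
  have hσap : ∀ b, f (σ b) = b := fun b => congrFun (congrArg (fun g => g.toFun) hσ) b
  have hσinj : Function.Injective σ := fun x y h => by rw [← hσap x, ← hσap y, h]
  have hcompl : IsCompl (LinearMap.ker f) (LinearMap.range σ) := by
    constructor
    · rw [_root_.disjoint_iff, eq_bot_iff]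
      rintro x ⟨hx1, b, rfl⟩
      have : b = 0 := by rw [← hσap b]; exact hx1
      simp [this]
    · rw [codisjoint_iff, eq_top_iff]
      intro a _
      have h1 : a - σ (f a) ∈ LinearMap.ker f := by simp [hσap]
      exact Submodule.mem_sup.mpr ⟨a - σ (f a), h1, σ (f a), ⟨f a, rfl⟩, by abel⟩
  have e2 : (↥(LinearMap.ker f) × ↥(LinearMap.range σ)) ≃ₗ[S] (↥(LinearMap.ker f) × B) :=
    LinearEquiv.prodCongr (LinearEquiv.refl S ↥(LinearMap.ker f)) (LinearEquiv.ofInjective σ hσinj).symm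
  exact ⟨(Submodule.prodEquivOfIsCompl _ _ hcompl).symm.trans e2⟩

theorem main_module {S : Type} [Ring S]
    (hid : ∀ I : Ideal S, Module.Projective S ↥I)
    {M L F U : Type} [AddCommGroup M] [Module S M] [AddCommGroup L] [Module S L]
    [AddCommGroup F] [Module S F] [AddCommGroup U] [Module S U]
    (hL : Module.Projective S L) (hF : Module.FinitePresentation S F)
    (hU : Module.Projective S U) (ε : (M × L) ≃ₗ[S] (F × U)) :
    ∃ (N' : Submodule S (F × U)) (P' : Submodule S U),
      Module.FinitePresentation S ↥N' ∧ Module.Projective S ↥P' ∧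
      Nonempty (M ≃ₗ[S] (↥N' × ↥P')) := by
  classical
  set iM : M →ₗ[S] F × U := ε.toLinearMap ∘ₗ LinearMap.inl S M L with hiM
  set iL : L →ₗ[S] F × U := ε.toLinearMap ∘ₗ LinearMap.inr S M L with hiL
  set Mb : Submodule S (F × U) := LinearMap.range iM with hMb
  set Lb : Submodule S (F × U) := LinearMap.range iL with hLb
  have hiMinj : Function.Injective iM := ε.injective.comp LinearMap.inl_injective
  have hiLinj : Function.Injective iL := ε.injective.comp LinearMap.inr_injective
  have eM : M ≃ₗ[S] ↥Mb := LinearEquiv.ofInjective iM hiMinj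
  have eL : L ≃ₗ[S] ↥Lb := LinearEquiv.ofInjective iL hiLinj
  have hcompl : IsCompl Mb Lb := by
    constructor
    · rw [_root_.disjoint_iff, eq_bot_iff]
      rintro x ⟨⟨m, rfl⟩, l, hl⟩
      have : (m, (0 : L)) = ((0 : M), l) := ε.injective hl.symm
      have hm : m = 0 := by
        have := congrArg Prod.fst this
        simpa using this
      simp [hiM, hm]
    · rw [codisjoint_iff, eq_top_iff]
      intro x _
      have hx : iM (ε.symm x).1 + iL (ε.symm x).2 = x := by
        have : ((ε.symm x).1, (0 : L)) + ((0 : M), (ε.symm x).2) = ε.symm x := by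
          ext <;> simp
        calc iM (ε.symm x).1 + iL (ε.symm x).2
            = ε (((ε.symm x).1, (0 : L)) + ((0 : M), (ε.symm x).2)) := by
              rw [map_add]; rfl
          _ = x := by rw [this, ε.apply_symm_apply]
      exact Submodule.mem_sup.mpr ⟨iM (ε.symm x).1, ⟨_, rfl⟩, iL (ε.symm x).2, ⟨_, rfl⟩, hx⟩
  -- the projective part
  set P' : Submodule S U := Submodule.map (LinearMap.snd S F U) Mb with hP'
  have hP'proj : Module.Projective S ↥P' := kaplansky_submodule hid hU P'
  set q : ↥Mb →ₗ[S] ↥P' :=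
    LinearMap.codRestrict P' ((LinearMap.snd S F U) ∘ₗ Mb.subtype)
      (fun x => ⟨(x : F × U), x.2, rfl⟩) with hq
  have hqsurj : Function.Surjective q := by
    rintro ⟨u, x, hx, hxu⟩
    exact ⟨⟨x, hx⟩, Subtype.ext hxu⟩
  obtain ⟨e1⟩ := split_of_projective_quotient q hqsurj hP'proj
  -- the finitely presented part
  set N' : Submodule S (F × U) := Mb ⊓ LinearMap.range (LinearMap.inl S F U) with hN'
  have hker : LinearMap.ker q = Submodule.comap Mb.subtype N' := by
    ext x
    constructor
    · intro hx
      have hx2 : (x : F × U).2 = 0 := congrArg Subtype.val hx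
      refine ⟨x.2, ⟨(x : F × U).1, ?_⟩⟩
      ext
      · rfl
      · simp [hx2]
    · rintro ⟨-, f₀, hf⟩
      have hx2 : (x : F × U).2 = 0 := by
        simpa using (congrArg Prod.snd hf).symm
      exact Subtype.ext hx2
  have eker : ↥(LinearMap.ker q) ≃ₗ[S] ↥N' :=
    (LinearEquiv.ofEq _ _ hker).trans (Submodule.comapSubtypeEquivOfLe inf_le_left)
  -- N' is finitely presented
  set NF : Submodule S F := Submodule.comap (LinearMap.inl S F U) Mb with hNF
  have hNFN' : Submodule.map (LinearMap.inl S F U) NF = N' := by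
    rw [hNF, Submodule.map_comap_eq, hN', inf_comm]
  have eNF : ↥NF ≃ₗ[S] ↥N' :=
    (Submodule.equivMapOfInjective _ LinearMap.inl_injective NF).trans
      (LinearEquiv.ofEq _ _ hNFN')
  -- quotient F ⧸ NF is projective
  have hQuotProj : Module.Projective S ((F × U) ⧸ Mb) := by
    have e2 : ((F × U) ⧸ Mb) ≃ₗ[S] ↥Lb := Submodule.quotientEquivOfIsCompl Mb Lb hcompl
    haveI := hL
    exact Module.Projective.of_equiv (eL.trans e2.symm)
  have hCembed : ∃ g : (F ⧸ NF) →ₗ[S] ((F × U) ⧸ Mb), Function.Injective g := by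
    have hle : NF ≤ LinearMap.ker (Mb.mkQ ∘ₗ LinearMap.inl S F U) := by
      intro x hx
      show Mb.mkQ (LinearMap.inl S F U x) = 0
      rw [Submodule.mkQ_apply, Submodule.Quotient.mk_eq_zero]
      exact hx
    refine ⟨Submodule.liftQ NF (Mb.mkQ ∘ₗ LinearMap.inl S F U) hle, ?_⟩
    rw [← LinearMap.ker_eq_bot]
    apply Submodule.ker_liftQ_eq_bot
    intro x hx
    have h2 : Mb.mkQ (LinearMap.inl S F U x) = 0 := hx
    rw [Submodule.mkQ_apply, Submodule.Quotient.mk_eq_zero] at h2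
    exact h2
  obtain ⟨g, hginj⟩ := hCembed
  have hCproj : Module.Projective S (F ⧸ NF) := by
    have := kaplansky_submodule hid hQuotProj (LinearMap.range g)
    exact Module.Projective.of_equiv (LinearEquiv.ofInjective g hginj).symm
  haveI : Module.Finite S F := inferInstance
  haveI hCfin : Module.Finite S (F ⧸ NF) := Module.Finite.quotient S NF
  -- splitting of F → F ⧸ NF
  obtain ⟨s, hs⟩ := Module.projective_lifting_property (h := hCproj) NF.mkQ LinearMap.id
    (Submodule.mkQ_surjective NF)
  have hsap : ∀ c, NF.mkQ (s c) = c := fun c => congrFun (congrArg (fun g => g.toFun) hs) c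
  set ρ : F →ₗ[S] F := LinearMap.id - s ∘ₗ NF.mkQ with hρ
  have hρap : ∀ x, ρ x = x - s (NF.mkQ x) := fun x => rfl
  have hρmem : ∀ x, ρ x ∈ NF := by
    intro x
    have h0 : NF.mkQ (ρ x) = 0 := by
      rw [hρap, map_sub, hsap, sub_self]
    rwa [Submodule.mkQ_apply, Submodule.Quotient.mk_eq_zero] at h0
  set g2 : F →ₗ[S] ↥NF := LinearMap.codRestrict NF ρ hρmem with hg2
  have hg2surj : Function.Surjective g2 := by
    rintro ⟨x, hx⟩
    refine ⟨x, Subtype.ext ?_⟩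
    have h0 : NF.mkQ x = 0 := by
      rw [Submodule.mkQ_apply, Submodule.Quotient.mk_eq_zero]; exact hx
    show ρ x = x
    rw [hρap, h0, map_zero, sub_zero]
  have hkerg2 : LinearMap.ker g2 = LinearMap.range s := by
    ext x
    constructor
    · intro hx
      have h1 : ρ x = 0 := congrArg Subtype.val hx
      rw [hρap] at h1
      exact ⟨NF.mkQ x, (sub_eq_zero.mp h1).symm⟩
    · rintro ⟨c, rfl⟩
      have : ρ (s c) = 0 := by rw [hρap, hsap, sub_self]
      exact Subtype.ext this
  have hkerfg : (LinearMap.ker g2).FG := by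
    rw [hkerg2, ← Submodule.map_top]
    exact Submodule.FG.map _ (Module.finite_def.mp hCfin)
  haveI hNFfp : Module.FinitePresentation S ↥NF :=
    Module.finitePresentation_of_surjective g2 hg2surj hkerfg
  have hN'fp : Module.FinitePresentation S ↥N' :=
    Module.finitePresentation_of_surjective eNF.toLinearMap eNF.surjective
      (by rw [LinearMap.ker_eq_bot.mpr eNF.injective]; exact Submodule.fg_bot)
  exact ⟨N', P', hN'fp, hP'proj,
    ⟨eM.trans (e1.trans (LinearEquiv.prodCongr eker (LinearEquiv.refl S ↥P')))⟩⟩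

theorem hereditary_summand_decomposition (R : Type) [Ring R]
    (hher : ∀ (I : Ideal Rᵐᵒᵖ), Module.Projective Rᵐᵒᵖ I)
    (M L F U : RMod R) (hL : Projective L) (hF : Module.FinitePresentation Rᵐᵒᵖ F)
    (hU : Projective U) (e : Nonempty ((M ⊞ L) ≅ (F ⊞ U))) :
    ∃ (N P : RMod R), Module.FinitePresentation Rᵐᵒᵖ N ∧ Projective P ∧
      Nonempty (M ≅ (N ⊞ P)) := by
  obtain ⟨e⟩ := e
  set S := Rᵐᵒᵖ
  have hLmod : Module.Projective S ↑L := (IsProjective.iff_projective _).mpr hL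
  have hUmod : Module.Projective S ↑U := (IsProjective.iff_projective _).mpr hU
  have ε : (↑M × ↑L) ≃ₗ[S] (↑F × ↑U) :=
    ((ModuleCat.biprodIsoProd M L).symm ≪≫ e ≪≫ ModuleCat.biprodIsoProd F U).toLinearEquiv
  obtain ⟨N', P', hN'fp, hP'proj, ⟨em⟩⟩ := main_module hher hLmod hF hUmod ε
  refine ⟨ModuleCat.of S ↥N', ModuleCat.of S ↥P', hN'fp,
    (IsProjective.iff_projective _).mp hP'proj, ⟨?_⟩⟩
  exact em.toModuleIso ≪≫
    (ModuleCat.biprodIsoProd (ModuleCat.of S ↥N') (ModuleCat.of S ↥P')).symm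
end
end

section
/- Let 0 → K → P → M → 0 be an exact sequence of right R-modules with P projective and K small, and let C be a projective module such that P ⊕ C is free, P ⊕ C ≅ R^{(I)}. Then there exists a finite subset J ⊆ I such that M ⊕ C ≅ (R^{(J)}/α(K)) ⊕ R^{(I∖J)}, where α : K → R^{(I)} is the composite embedding; in particular M ⊕ C is the direct sum of a finitely generated module and a free module. -/
open CategoryTheory CategoryTheory.Limits Opposite

noncomputable section

namespace SmallSyzygyAux

open CategoryTheory CategoryTheory.Limits Opposite

set_option maxHeartbeats 1000000

/-- The cofan exhibiting `I →₀ R` as the coproduct of copies of `R`. -/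
noncomputable def finsuppCofan (R : Type) [Ring R] (I : Type) :
    Cofan (fun _ : I => ModuleCat.of Rᵐᵒᵖ R) :=
  Cofan.mk (ModuleCat.of Rᵐᵒᵖ (I →₀ R)) (fun i => ModuleCat.ofHom (Finsupp.lsingle i))

noncomputable def finsuppCofanIsColimit (R : Type) [Ring R] (I : Type) :
    IsColimit (finsuppCofan R I) :=
  mkCofanColimit _
    (fun t => ModuleCat.ofHom (Finsupp.lsum ℕ (fun i => (t.inj i).hom)))
    (fun t j => by
      exact ModuleCat.hom_ext <| Finsupp.lsum_comp_lsingle ℕ (fun i => (t.inj i).hom) j)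
    (fun t m hm => by
      refine ModuleCat.hom_ext (Finsupp.lhom_ext' (fun i => ?_))
      refine Eq.trans (congrArg ModuleCat.Hom.hom (hm i)) ?_
      exact (Finsupp.lsum_comp_lsingle ℕ (fun i => (t.inj i).hom) i).symm)

/-- Composition with a fixed morphism, as an additive monoid hom between hom groups. -/
def compAddHom {C : Type*} [Category C] [Preadditive C] {X Y Z : C} (f : Y ⟶ Z) :
    (X ⟶ Y) →+ (X ⟶ Z) :=
  AddMonoidHom.mk' (fun g => g ≫ f) (fun _ _ => Preadditive.add_comp _ _ _ _ _ _)

theorem inl_biprodIsoProd {R : Type} [Ring R] (M N : ModuleCat.{0} R) :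
    biprod.inl ≫ (ModuleCat.biprodIsoProd M N).hom =
      ModuleCat.ofHom (LinearMap.inl R M N) := by
  rw [← Iso.eq_comp_inv]
  apply biprod.hom_ext
  · rw [Category.assoc, ModuleCat.biprodIsoProd_inv_comp_fst, biprod.inl_fst]
    exact congrArg ModuleCat.ofHom (LinearMap.fst_comp_inl R M N)
  · rw [Category.assoc, ModuleCat.biprodIsoProd_inv_comp_snd, biprod.inl_snd]
    exact congrArg ModuleCat.ofHom (LinearMap.snd_comp_inl R M N)

end SmallSyzygyAux

open SmallSyzygyAux in
theorem small_range_supported (R : Type) [Ring R] (K : RMod R) (hK : IsSmallModule R K)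
    (I : Type) (phi : K ⟶ ModuleCat.of Rᵐᵒᵖ (I →₀ R)) :
    ∃ J : Finset I, LinearMap.range phi.hom ≤
      Finsupp.supported R Rᵐᵒᵖ (↑J : Set I) := by
  classical
  set F' := preadditiveCoyoneda.obj (op K) with hF'
  have := hK I
  have hc' : IsColimit (F'.mapCocone (finsuppCofan R I)) :=
    isColimitOfPreserves F' (finsuppCofanIsColimit R I)
  let D : Cocone ((Discrete.functor fun _ : I => regR R) ⋙ F') :=
    { pt := AddCommGrpCat.of (DirectSum I (fun _ : I => (K ⟶ regR R)))
      ι := Discrete.natTrans (fun i =>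
        AddCommGrpCat.ofHom (DirectSum.of (fun _ : I => (K ⟶ regR R)) i.as)) }
  let psi := hc'.desc D
  let u : D.pt ⟶ (F'.mapCocone (finsuppCofan R I)).pt :=
    AddCommGrpCat.ofHom (DirectSum.toAddMonoid (fun i =>
      compAddHom ((finsuppCofan R I).inj i)))
  have hret : ∀ (g : F'.obj (ModuleCat.of Rᵐᵒᵖ (I →₀ R))), u (psi g) = g := by
    have : psi ≫ u = 𝟙 _ := by
      refine hc'.hom_ext (fun j => ?_)
      simp only [Category.comp_id]
      rw [← Category.assoc, hc'.fac D j]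
      obtain ⟨i⟩ := j
      ext g
      exact (DirectSum.toAddMonoid_of (fun i => compAddHom ((finsuppCofan R I).inj i)) i g)
    intro g
    exact congrFun (congrArg (fun (h : _ ⟶ _) => (h : _ → _)) this) g
  set x : DirectSum I (fun _ : I => (K ⟶ regR R)) := psi phi with hx
  refine ⟨DFinsupp.support x, ?_⟩
  have hphi : phi = ∑ i ∈ DFinsupp.support x, ((x i) ≫ (finsuppCofan R I).inj i) := by
    have h1 : u x = phi := hret phi
    rw [← h1]
    conv_lhs => rw [← DirectSum.sum_support_of x]
    rw [map_sum]
    refine Finset.sum_congr rfl (fun i _ => ?_)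
    exact DirectSum.toAddMonoid_of (fun i => compAddHom ((finsuppCofan R I).inj i)) i (x i)
  rintro _ ⟨k, rfl⟩
  rw [hphi]
  have hsum : ((∑ i ∈ DFinsupp.support x, ((x i) ≫ (finsuppCofan R I).inj i) :
      K ⟶ ModuleCat.of Rᵐᵒᵖ (I →₀ R))).hom k
      = ∑ i ∈ DFinsupp.support x,
          (((x i) ≫ (finsuppCofan R I).inj i : K ⟶ ModuleCat.of Rᵐᵒᵖ (I →₀ R))).hom k := by
    rw [ModuleCat.hom_sum]; exact LinearMap.sum_apply _ _ _
  erw [hsum]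
  refine Submodule.sum_mem _ (fun i hi => ?_)
  have : (((x i) ≫ (finsuppCofan R I).inj i : K ⟶ ModuleCat.of Rᵐᵒᵖ (I →₀ R))).hom k
      = Finsupp.single i ((x i).hom k) := rfl
  rw [this]
  exact Finsupp.single_mem_supported _ _ (by exact_mod_cast hi)

set_option maxHeartbeats 1000000 in
/-- The splitting of `R^{(I)}` along a finite set `J` containing the support of `N`. -/
theorem finsupp_quot_split {R : Type} [Ring R] {I : Type} (J : Finset I)
    (N : Submodule Rᵐᵒᵖ (I →₀ R)) (hN : N ≤ Finsupp.supported R Rᵐᵒᵖ (↑J : Set I)) :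
    ∃ (q : (I →₀ R) →ₗ[Rᵐᵒᵖ]
      ((@HasQuotient.Quotient _ _ (Submodule.hasQuotient (R := Rᵐᵒᵖ) (M := ↥(Finsupp.supported R Rᵐᵒᵖ (↑J : Set I))))
          (N.comap (Finsupp.supported R Rᵐᵒᵖ (↑J : Set I)).subtype)) ×
        ↥(Finsupp.supported R Rᵐᵒᵖ ((↑J : Set I)ᶜ)))),
      Function.Surjective q ∧ LinearMap.ker q = N := by
  classical
  set s : Set I := (↑J : Set I) with hs
  set Nc := N.comap (Finsupp.supported R Rᵐᵒᵖ s).subtype with hNc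
  refine ⟨LinearMap.prod ((Submodule.mkQ _).comp (Finsupp.restrictDom R Rᵐᵒᵖ s))
    ((Finsupp.restrictDom R Rᵐᵒᵖ sᶜ)), ?_, ?_⟩
  · rintro ⟨ym, z⟩
    obtain ⟨y, rfl⟩ := Submodule.Quotient.mk_surjective _ ym
    refine ⟨(y : I →₀ R) + (z : I →₀ R), ?_⟩
    have h1 : Finsupp.restrictDom R Rᵐᵒᵖ s ((y : I →₀ R) + (z : I →₀ R)) = y := by
      apply Subtype.ext
      rw [Finsupp.restrictDom_apply, Finsupp.filter_add]
      have hy : Finsupp.filter (· ∈ s) (y : I →₀ R) = (y : I →₀ R) := by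
        ext a
        by_cases ha : a ∈ s
        · rw [Finsupp.filter_apply_pos _ _ ha]
        · rw [Finsupp.filter_apply_neg _ _ ha]
          exact ((Finsupp.mem_supported' _ _).1 y.2 a ha).symm
      have hz : Finsupp.filter (· ∈ s) (z : I →₀ R) = 0 := by
        ext a
        by_cases ha : a ∈ s
        · rw [Finsupp.filter_apply_pos _ _ ha]
          exact (Finsupp.mem_supported' _ _).1 z.2 a (by simpa using ha)
        · rw [Finsupp.filter_apply_neg _ _ ha]; rfl
      rw [hy, hz, add_zero]
    have h2 : Finsupp.restrictDom R Rᵐᵒᵖ sᶜ ((y : I →₀ R) + (z : I →₀ R)) = z := by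
      apply Subtype.ext
      rw [Finsupp.restrictDom_apply, Finsupp.filter_add]
      have hy : Finsupp.filter (· ∈ sᶜ) (y : I →₀ R) = 0 := by
        ext a
        by_cases ha : a ∈ sᶜ
        · rw [Finsupp.filter_apply_pos _ _ ha]
          exact (Finsupp.mem_supported' _ _).1 y.2 a (by simpa using ha)
        · rw [Finsupp.filter_apply_neg _ _ ha]; rfl
      have hz : Finsupp.filter (· ∈ sᶜ) (z : I →₀ R) = (z : I →₀ R) := by
        ext a
        by_cases ha : a ∈ sᶜ
        · rw [Finsupp.filter_apply_pos _ _ ha]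
        · rw [Finsupp.filter_apply_neg _ _ ha]
          exact ((Finsupp.mem_supported' _ _).1 z.2 a ha).symm
      rw [hy, hz, zero_add]
    rw [LinearMap.prod_apply]
    exact Prod.ext (by simp [h1]) h2
  · ext x
    rw [LinearMap.mem_ker, LinearMap.prod_apply, Prod.mk_eq_zero]
    constructor
    · rintro ⟨h1, h2⟩
      have h2' : Finsupp.filter (· ∈ sᶜ) x = 0 :=
        congrArg Subtype.val h2
      have hxs : Finsupp.filter (· ∈ s) x = x := by
        conv_rhs => rw [← Finsupp.filter_pos_add_filter_neg x (· ∈ s)]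
        have : Finsupp.filter (fun a => ¬ a ∈ s) x = 0 := by
          rw [← h2']; congr 1
        rw [this, add_zero]
      have h1' : (Finsupp.restrictDom R Rᵐᵒᵖ s x : I →₀ R) ∈ N := by
        have := (Submodule.Quotient.mk_eq_zero _).1 h1
        exact this
      rw [Finsupp.restrictDom_apply] at h1'
      rwa [hxs] at h1'
    · intro hx
      have hxsupp : x ∈ Finsupp.supported R Rᵐᵒᵖ s := hN hx
      have hxs : Finsupp.filter (· ∈ s) x = x := by
        ext a
        by_cases ha : a ∈ s
        · rw [Finsupp.filter_apply_pos _ _ ha]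
        · rw [Finsupp.filter_apply_neg _ _ ha]
          exact ((Finsupp.mem_supported' _ _).1 hxsupp a ha).symm
      constructor
      · show Nc.mkQ (Finsupp.restrictDom R Rᵐᵒᵖ s x) = 0
        rw [Submodule.mkQ_apply, Submodule.Quotient.mk_eq_zero]
        show (Finsupp.restrictDom R Rᵐᵒᵖ s x : I →₀ R) ∈ N
        rw [Finsupp.restrictDom_apply, hxs]; exact hx
      · show Finsupp.restrictDom R Rᵐᵒᵖ sᶜ x = 0
        apply Subtype.ext
        rw [Finsupp.restrictDom_apply]
        show Finsupp.filter (· ∈ sᶜ) x = ((0 : ↥(Finsupp.supported R Rᵐᵒᵖ sᶜ)) : I →₀ R)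
        ext a
        by_cases ha : a ∈ sᶜ
        · rw [Finsupp.filter_apply_pos _ _ ha]
          exact (Finsupp.mem_supported' _ _).1 hxsupp a (by simpa using ha)
        · rw [Finsupp.filter_apply_neg _ _ ha]; rfl

set_option maxHeartbeats 1000000 in
theorem small_syzygy_finite_support (R : Type) [Ring R]
    (K P M C : RMod R) (α : K ⟶ P) (β : P ⟶ M) (w : α ≫ β = 0)
    (hα : Mono α) (hβ : Epi β) (hex : (ShortComplex.mk α β w).Exact)
    (hP : Projective P) (hK : IsSmallModule R K) (hC : Projective C)
    (I : Type) (e : (P ⊞ C) ≅ ModuleCat.of Rᵐᵒᵖ (I →₀ R)) :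
    ∃ (J : Finset I),
      LinearMap.range ((α ≫ biprod.inl ≫ e.hom : K ⟶ ModuleCat.of Rᵐᵒᵖ (I →₀ R)).hom :
          ↥K →ₗ[Rᵐᵒᵖ] (I →₀ R)) ≤ Finsupp.supported R Rᵐᵒᵖ (↑J : Set I) ∧
      Nonempty ((M ⊞ C) ≅ ModuleCat.of Rᵐᵒᵖ
        ((@HasQuotient.Quotient _ _ (Submodule.hasQuotient (R := Rᵐᵒᵖ) (M := ↥(Finsupp.supported R Rᵐᵒᵖ (↑J : Set I)))) (
            (LinearMap.range ((α ≫ biprod.inl ≫ e.hom : K ⟶ ModuleCat.of Rᵐᵒᵖ (I →₀ R)).hom :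
                ↥K →ₗ[Rᵐᵒᵖ] (I →₀ R))).comap
              (Finsupp.supported R Rᵐᵒᵖ (↑J : Set I)).subtype)) ×
          ↥(Finsupp.supported R Rᵐᵒᵖ ((↑J : Set I)ᶜ)))) ∧
      Module.Finite Rᵐᵒᵖ
        (@HasQuotient.Quotient _ _ (Submodule.hasQuotient (R := Rᵐᵒᵖ) (M := ↥(Finsupp.supported R Rᵐᵒᵖ (↑J : Set I)))) (
          (LinearMap.range ((α ≫ biprod.inl ≫ e.hom : K ⟶ ModuleCat.of Rᵐᵒᵖ (I →₀ R)).hom :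
              ↥K →ₗ[Rᵐᵒᵖ] (I →₀ R))).comap
            (Finsupp.supported R Rᵐᵒᵖ (↑J : Set I)).subtype)) ∧
      Module.Free Rᵐᵒᵖ ↥(Finsupp.supported R Rᵐᵒᵖ ((↑J : Set I)ᶜ)) := by
  classical
  have Efree : R ≃ₗ[Rᵐᵒᵖ] Rᵐᵒᵖ :=
    { MulOpposite.opAddEquiv with
      map_smul' := fun x r => by
        show MulOpposite.op (x • r) = x • MulOpposite.op r
        rw [MulOpposite.smul_eq_mul_unop, smul_eq_mul]
        rfl }
  haveI hfree : Module.Free Rᵐᵒᵖ R := Module.Free.of_equiv Efree.symm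
  haveI hfin : Module.Finite Rᵐᵒᵖ R := Module.Finite.equiv Efree.symm
  obtain ⟨J, hJ⟩ := small_range_supported R K hK I (α ≫ biprod.inl ≫ e.hom)
  refine ⟨J, hJ, ?_, ?_, ?_⟩
  · -- the isomorphism
    set A : K ⟶ ModuleCat.of Rᵐᵒᵖ (I →₀ R) := α ≫ biprod.inl ≫ e.hom with hA
    set b := ModuleCat.biprodIsoProd P C with hb
    set g : ModuleCat.of Rᵐᵒᵖ (I →₀ R) ⟶ ModuleCat.of Rᵐᵒᵖ (↥P × ↥C) := e.inv ≫ b.hom with hg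
    set ginv : ModuleCat.of Rᵐᵒᵖ (↥P × ↥C) ⟶ ModuleCat.of Rᵐᵒᵖ (I →₀ R) := b.inv ≫ e.hom with hginv
    have hgg : ∀ y, ginv.hom (g.hom y) = y := by
      intro y
      have : g ≫ ginv = 𝟙 _ := by rw [hg, hginv]; simp
      exact congrFun (congrArg (fun (h : _ ⟶ _) => (h : _ → _)) this) y
    have hgg' : ∀ y, g.hom (ginv.hom y) = y := by
      intro y
      have : ginv ≫ g = 𝟙 _ := by rw [hg, hginv]; simp
      exact congrFun (congrArg (fun (h : _ ⟶ _) => (h : _ → _)) this) y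
    have hAeq : ∀ k, A.hom k = ginv.hom (α k, 0) := by
      intro k
      have h1 : A = α ≫ ModuleCat.ofHom (LinearMap.inl Rᵐᵒᵖ P C) ≫ ginv := by
        rw [hA, hginv, ← SmallSyzygyAux.inl_biprodIsoProd, hb]
        simp
      rw [h1]; rfl
    set ψ : (I →₀ R) →ₗ[Rᵐᵒᵖ] (↥M × ↥C) :=
      (LinearMap.prodMap β.hom LinearMap.id).comp g.hom with hψ
    have hrk : LinearMap.range α.hom = LinearMap.ker β.hom :=
      (ShortComplex.moduleCat_exact_iff_range_eq_ker _).mp hex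
    have hker : LinearMap.ker ψ = LinearMap.range A.hom := by
      ext x
      constructor
      · intro hx
        rw [LinearMap.mem_ker] at hx
        have h1 : β.hom (g.hom x).1 = 0 :=
          congrArg Prod.fst hx
        have h2 : (g.hom x).2 = 0 := congrArg Prod.snd hx
        have : (g.hom x).1 ∈ LinearMap.range α.hom := by
          rw [hrk]; exact h1
        obtain ⟨k, hk⟩ := this
        have hgx : g.hom x = (α.hom k, (0 : ↥C)) :=
          Prod.ext hk.symm h2
        refine ⟨k, ?_⟩
        have : A.hom k = x := by
          rw [hAeq k, ← hgx, hgg]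
        exact this
      · rintro ⟨k, rfl⟩
        rw [LinearMap.mem_ker]
        have hstep : ψ (A.hom k) =
            (β.hom (α.hom k), (0 : ↥C)) := by
          show (LinearMap.prodMap β.hom LinearMap.id)
            (g.hom (A.hom k)) = _
          rw [hAeq k, hgg']
          rfl
        rw [hstep]
        have hw : β.hom (α.hom k) = 0 :=
          congrFun (congrArg (fun (h : K ⟶ M) => (h : ↥K → ↥M)) w) k
        rw [hw]
        rfl
    have hsurj : Function.Surjective ψ := by
      have hb' : Function.Surjective β.hom :=
        (ModuleCat.epi_iff_surjective β).mp hβ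
      have h1 : Function.Surjective
          (LinearMap.prodMap β.hom (LinearMap.id (M := ↥C))) :=
        Function.Surjective.prodMap hb' Function.surjective_id
      have h2 : Function.Surjective g.hom :=
        fun y => ⟨ginv.hom y, hgg' y⟩
      exact h1.comp h2
    obtain ⟨q, hqsurj, hqker⟩ := finsupp_quot_split J
      (LinearMap.range A.hom) hJ
    refine ⟨(ModuleCat.biprodIsoProd M C) ≪≫ LinearEquiv.toModuleIso ?_⟩
    have hh := LinearMap.quotKerEquivOfSurjective (M₂ := ((@HasQuotient.Quotient _ _
      (Submodule.hasQuotient (R := Rᵐᵒᵖ) (M := ↥(Finsupp.supported R Rᵐᵒᵖ (↑J : Set I))))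
      ((LinearMap.range A.hom).comap (Finsupp.supported R Rᵐᵒᵖ (↑J : Set I)).subtype)) ×
      ↥(Finsupp.supported R Rᵐᵒᵖ ((↑J : Set I)ᶜ)))) q hqsurj
    refine ((Submodule.quotEquivOfEq _ _ hker).symm ≪≫ₗ
        (ψ.quotKerEquivOfSurjective hsurj)).symm ≪≫ₗ
      ((Submodule.quotEquivOfEq _ _ hqker.symm) ≪≫ₗ ?_)
    exact hh
  · -- finiteness
    have h1 : Module.Finite Rᵐᵒᵖ (↥(Finsupp.supported R Rᵐᵒᵖ (↑J : Set I))) := by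
      have e1 := Finsupp.supportedEquivFinsupp (M := R) (R := Rᵐᵒᵖ) (↑J : Set I)
      have e2 := Finsupp.linearEquivFunOnFinite Rᵐᵒᵖ R ↥(↑J : Set I)
      haveI : Module.Finite Rᵐᵒᵖ (↥(↑J : Set I) → R) := Module.Finite.pi
      exact Module.Finite.equiv (e1 ≪≫ₗ e2).symm
    exact Module.Finite.quotient Rᵐᵒᵖ _
  · -- freeness
    exact Module.Free.of_equiv (Finsupp.supportedEquivFinsupp
      (M := R) (R := Rᵐᵒᵖ) ((↑J : Set I)ᶜ)).symm
end
end
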